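/- With A = E(1) ⊗ E(n-1)^{r-1} as above, k = min{n-1, 2r-2}, and J ⊆ {1,…,n-1} with |J| = k, the bidegree-(r, k+1-r) component of the product π = ē₀ ∏_{i∈J} ē_i equals ∑_{I ⊆ J, |I| = r-1} ± e₀e_I ⊗ e_{J∖I}, and this sum is nonzero because the terms e₀e_I ⊗ e_{J∖I} are distinct elements of a basis of A ⊗ A. -/

import Mathlib

open ExteriorAlgebra

/-! Let `A = E(1) ⊗ E(n-1)^{r-1}` be the Koszul-signed graded tensor product of the exterior
algebra on one degree-one generator `e₀` with the exterior algebra on `n-1` degree-one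
generators `e₁, …, e_{n-1}` truncated above degree `r-1`.  Since the Koszul tensor product of
exterior algebras is the exterior algebra on the direct sum of the generating spaces, both `A`
and its Koszul tensor square `A ⊗ A` have canonical presentations as quotients of exterior
algebras: `A ⊗ A` is the exterior algebra on two copies (indexed by `b : Fin 2`, where `b = 0`
is the left tensor factor and `b = 1` the right one) of the generators `e₀, …, e_{n-1}`,
modulo the two-sided ideal generated by the degree-`r` monomials in `e₁, …, e_{n-1}` of each
copy.  Under this identification `x ⊗ y` corresponds to `x⁽⁰⁾ · y⁽¹⁾`. -/

/-- The exterior algebra on two copies of the `n` generators. -/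
abbrev ExtAlg2 (n : ℕ) : Type := ExteriorAlgebra ℂ (Fin 2 × Fin n → ℂ)

/-- The generator `e_i` of the copy `b` (`b = 0`: left factor `e_i ⊗ 1`;
`b = 1`: right factor `1 ⊗ e_i`). -/
noncomputable def bgen (n : ℕ) (b : Fin 2) (i : Fin n) : ExtAlg2 n :=
  ι ℂ (Pi.single (b, i) 1)

/-- The monomial `e_S` in the generators of the copy `b`, in increasing order. -/
noncomputable def bProd (n : ℕ) (b : Fin 2) (S : Finset (Fin n)) : ExtAlg2 n :=
  ((S.sort (· ≤ ·)).map (bgen n b)).prod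

/-- The relation killing the degree-`r` monomials in `e₁, …, e_{n-1}` of each copy:
the truncation of each tensor factor of `A ⊗ A` above degree `r-1`. -/
def A2Rel (n r : ℕ) : ExtAlg2 n → ExtAlg2 n → Prop :=
  fun x y => y = 0 ∧ ∃ (b : Fin 2) (S : Finset (Fin n)),
    (∀ i ∈ S, (i : ℕ) ≠ 0) ∧ S.card = r ∧ x = bProd n b S

/-- `A ⊗ A` with the sign-twisted multiplication, in its canonical presentation. -/
abbrev A2 (n r : ℕ) : Type := RingQuot (A2Rel n r)

/-- The quotient map onto `A ⊗ A`. -/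
noncomputable def a2mk (n r : ℕ) : ExtAlg2 n →ₐ[ℂ] A2 n r :=
  RingQuot.mkAlgHom ℂ (A2Rel n r)

/-- `ē_i = 1⊗e_i − e_i⊗1` in `A ⊗ A`. -/
noncomputable def ebar (n r : ℕ) (i : Fin n) : A2 n r :=
  a2mk n r (bgen n 1 i) - a2mk n r (bgen n 0 i)

/-- The span of the degree-one generators of the copy `b`. -/
noncomputable def blockV (n : ℕ) (b : Fin 2) : Submodule ℂ (Fin 2 × Fin n → ℂ) :=
  Submodule.span ℂ (Set.range fun i : Fin n => (Pi.single (b, i) 1 : Fin 2 × Fin n → ℂ))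

/-- The bidegree-`(s,t)` component `A_s ⊗ A_t` of `A ⊗ A`: the image in `A ⊗ A` of the span of
products of `s` generators of the left copy and `t` generators of the right copy. -/
noncomputable def bicomp (n r s t : ℕ) : Submodule ℂ (A2 n r) :=
  (((blockV n 0).map (ι ℂ)) ^ s * ((blockV n 1).map (ι ℂ)) ^ t).map (a2mk n r).toLinearMap

/-- `e₀e_I ⊗ e_{J∖I}` as an element of `A ⊗ A`. -/
noncomputable def basicTerm (n r : ℕ) (hn : 0 < n) (J I : Finset (Fin n)) : A2 n r :=
  a2mk n r (bgen n 0 ⟨0, hn⟩ * bProd n 0 I * bProd n 1 (J \ I))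

/-! ### Auxiliary lemmas -/

lemma list_prod_mem_pow {n : ℕ} (b : Fin 2) (l : List (Fin n)) :
    (l.map (bgen n b)).prod ∈ ((blockV n b).map (ι ℂ)) ^ l.length := by
  induction l with
  | nil =>
    rw [List.map_nil, List.prod_nil, List.length_nil, pow_zero, Submodule.one_eq_span]
    exact Submodule.subset_span rfl
  | cons j l ih =>
    rw [List.map_cons, List.prod_cons, List.length_cons, pow_succ']
    exact Submodule.mul_mem_mul
      (Submodule.mem_map_of_mem (Submodule.subset_span ⟨j, rfl⟩)) ih

lemma bProd_mem_pow {n : ℕ} (b : Fin 2) (S : Finset (Fin n)) :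
    bProd n b S ∈ ((blockV n b).map (ι ℂ)) ^ S.card := by
  have h := list_prod_mem_pow b (S.sort (· ≤ ·))
  rwa [Finset.length_sort] at h

lemma term_mem_bicomp {n r : ℕ} (A B : Finset (Fin n)) :
    a2mk n r (bProd n 0 A * bProd n 1 B) ∈ bicomp n r A.card B.card :=
  Submodule.mem_map_of_mem (Submodule.mul_mem_mul (bProd_mem_pow 0 A) (bProd_mem_pow 1 B))

lemma a2mk_bProd_eq_zero {n r : ℕ} {S : Finset (Fin n)} (b : Fin 2)
    (hS : ∀ i ∈ S, (i : ℕ) ≠ 0) (hcard : S.card = r) :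
    a2mk n r (bProd n b S) = 0 := by
  have hrel : A2Rel n r (bProd n b S) 0 := ⟨rfl, b, S, hS, hcard, rfl⟩
  have h := RingQuot.mkAlgHom_rel ℂ hrel
  rw [map_zero] at h
  exact h


lemma neg_one_pow_choice (m : ℕ) : ((-1 : ℂ)) ^ m = 1 ∨ ((-1 : ℂ)) ^ m = -1 := by
  rcases Nat.even_or_odd m with h | h
  · exact Or.inl h.neg_one_pow
  · exact Or.inr h.neg_one_pow

lemma iota_mul_list_prod {n : ℕ} (l : List (Fin 2 × Fin n → ℂ)) (v : Fin 2 × Fin n → ℂ) :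
    ι ℂ v * (l.map (ι ℂ)).prod =
      ((-1 : ℂ)) ^ l.length • ((l.map (ι ℂ)).prod * ι ℂ v) := by
  induction l with
  | nil => simp
  | cons w l ih =>
    have swap : ι ℂ v * ι ℂ w = -(ι ℂ w * ι ℂ v) :=
      eq_neg_of_add_eq_zero_left (ι_add_mul_swap v w)
    simp only [List.map_cons, List.prod_cons, List.length_cons]
    rw [← mul_assoc, swap, neg_mul, mul_assoc, ih, mul_smul_comm, ← mul_assoc,
      pow_succ, mul_comm (((-1:ℂ))^l.length) (-1), mul_smul, neg_one_smul]

lemma bProd_insert {n : ℕ} (b : Fin 2) (i : Fin n) (S : Finset (Fin n))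
    (h : ∀ j ∈ S, i < j) :
    bProd n b (insert i S) = bgen n b i * bProd n b S := by
  have hni : i ∉ S := fun hi => lt_irrefl i (h i hi)
  unfold bProd
  rw [Finset.sort_insert (r := (· ≤ ·)) (fun j hj => (h j hj).le) hni, List.map_cons, List.prod_cons]

lemma bgen_mul_bProd0 {n : ℕ} (i : Fin n) (S : Finset (Fin n)) :
    bgen n 1 i * bProd n 0 S = ((-1:ℂ))^S.card • (bProd n 0 S * bgen n 1 i) := by
  have key := iota_mul_list_prod
    ((S.sort (· ≤ ·)).map fun j => (Pi.single ((0:Fin 2), j) 1 : Fin 2 × Fin n → ℂ))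
    (Pi.single (1, i) 1)
  simp [List.map_map, Function.comp_def, Finset.length_sort] at key
  exact key

lemma expand {n : ℕ} (l : List (Fin n)) (hl : l.Pairwise (· < ·)) :
    ∃ ε : Finset (Fin n) → ℂ, (∀ S, ε S = 1 ∨ ε S = -1) ∧
      (l.map fun i => bgen n 1 i - bgen n 0 i).prod =
        ∑ S ∈ l.toFinset.powerset, ε S • (bProd n 0 (l.toFinset \ S) * bProd n 1 S) := by
  induction l with
  | nil =>
    refine ⟨fun _ => 1, fun _ => Or.inl rfl, ?_⟩
    simp [bProd]
  | cons i l ih =>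
    rw [List.pairwise_cons] at hl
    obtain ⟨hil, hl'⟩ := hl
    obtain ⟨ε', hε', heq⟩ := ih hl'
    have hil' : ∀ j ∈ l.toFinset, i < j := fun j hj => hil j (List.mem_toFinset.mp hj)
    have hiT : i ∉ l.toFinset := fun h => lt_irrefl i (hil' i h)
    set T' := l.toFinset with hT'
    refine ⟨fun S => if i ∈ S then ((-1:ℂ))^((T' \ (S.erase i)).card) * ε' (S.erase i)
      else -(ε' S), fun S => ?_, ?_⟩
    · dsimp only; split_ifs
      · rcases neg_one_pow_choice ((T' \ (S.erase i)).card) with h | h <;>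
          rcases hε' (S.erase i) with h' | h' <;> rw [h, h'] <;> norm_num
      · rcases hε' S with h' | h' <;> rw [h'] <;> norm_num
    · rw [List.map_cons, List.prod_cons, heq, List.toFinset_cons, ← hT',
        Finset.sum_powerset_insert hiT, sub_mul, Finset.mul_sum, Finset.mul_sum]
      have key1 : ∀ S ∈ T'.powerset,
          bgen n 1 i * (ε' S • (bProd n 0 (T' \ S) * bProd n 1 S)) =
          (if i ∈ insert i S then
              ((-1:ℂ))^((T' \ ((insert i S).erase i)).card) * ε' ((insert i S).erase i)
            else -(ε' (insert i S))) •
            (bProd n 0 ((insert i T') \ (insert i S)) * bProd n 1 (insert i S)) := by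
        intro S hS
        rw [Finset.mem_powerset] at hS
        have hiS : i ∉ S := fun h => hiT (hS h)
        have hst : (insert i T') \ (insert i S) = T' \ S := by
          ext a
          simp only [Finset.mem_sdiff, Finset.mem_insert]
          constructor
          · rintro ⟨h1 | h1, h2⟩
            · exact ((h2 (Or.inl h1)).elim)
            · exact ⟨h1, fun ha => h2 (Or.inr ha)⟩
          · rintro ⟨h1, h2⟩
            exact ⟨Or.inr h1, by rintro (rfl | ha); exacts [hiT h1, h2 ha]⟩
        rw [if_pos (Finset.mem_insert_self i S), Finset.erase_insert hiS, hst,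
          mul_smul_comm, ← mul_assoc, bgen_mul_bProd0, smul_mul_assoc, mul_assoc,
          ← bProd_insert 1 i S (fun j hj => hil' j (hS hj)), mul_smul, smul_comm]
      have key0 : ∀ S ∈ T'.powerset,
          bgen n 0 i * (ε' S • (bProd n 0 (T' \ S) * bProd n 1 S)) =
          ε' S • (bProd n 0 ((insert i T') \ S) * bProd n 1 S) := by
        intro S hS
        rw [Finset.mem_powerset] at hS
        have hiS : i ∉ S := fun h => hiT (hS h)
        have hst : (insert i T') \ S = insert i (T' \ S) := by
          ext a
          simp only [Finset.mem_sdiff, Finset.mem_insert]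
          constructor
          · rintro ⟨h1 | h1, h2⟩
            · exact Or.inl h1
            · exact Or.inr ⟨h1, h2⟩
          · rintro (rfl | ⟨h1, h2⟩)
            exacts [⟨Or.inl rfl, hiS⟩, ⟨Or.inr h1, h2⟩]
        rw [hst, bProd_insert 0 i (T' \ S) (fun j hj => hil' j (Finset.mem_sdiff.mp hj).1),
          mul_smul_comm, mul_assoc]
      rw [Finset.sum_congr rfl key1, Finset.sum_congr rfl key0]
      have keyneg : ∀ S ∈ T'.powerset,
          (if i ∈ S then ((-1:ℂ))^((T' \ (S.erase i)).card) * ε' (S.erase i)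
            else -(ε' S)) • (bProd n 0 ((insert i T') \ S) * bProd n 1 S) =
          -(ε' S • (bProd n 0 ((insert i T') \ S) * bProd n 1 S)) := by
        intro S hS
        rw [Finset.mem_powerset] at hS
        rw [if_neg (fun h => hiT (hS h)), neg_smul]
      rw [Finset.sum_congr rfl keyneg, Finset.sum_neg_distrib]
      abel

set_option maxHeartbeats 1000000 in
lemma phi_exists {n r : ℕ} (hn : 0 < n) (hr : 1 ≤ r) (J I₀ : Finset (Fin n))
    (hJ0 : ∀ i ∈ J, (i : ℕ) ≠ 0) (hI₀J : I₀ ⊆ J) (hI₀c : I₀.card = r - 1)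
    (hK1 : (J \ I₀).card < r) :
    ∃ Φ : A2 n r →ₗ[ℂ] ℂ,
      Φ (basicTerm n r hn J I₀) = 1 ∧
      ∀ I, I ⊆ J → I.card = r - 1 → I ≠ I₀ → Φ (basicTerm n r hn J I) = 0 := by
  classical
  set z : Fin n := ⟨0, hn⟩ with hz
  set C : Fin 2 → Finset (Fin n) := fun b => if b = 0 then insert z I₀ else J \ I₀ with hC
  set P : (Fin 2 × Fin n → ℂ) →ₗ[ℂ] (Fin 2 × Fin n → ℂ) :=
    LinearMap.pi (fun p => if p.2 ∈ C p.1 then LinearMap.proj p else 0) with hP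
  have hPsingle : ∀ (b : Fin 2) (i : Fin n),
      P (Pi.single (b, i) 1) = if i ∈ C b then Pi.single (b, i) 1 else 0 := by
    intro b i
    funext p
    obtain ⟨pb, pi⟩ := p
    simp only [hP, LinearMap.pi_apply]
    by_cases hp : (pb, pi) = (b, i)
    · rw [Prod.ext_iff] at hp
      obtain ⟨h1, h2⟩ := hp
      dsimp at h1 h2
      subst h1; subst h2
      split_ifs <;> simp_all
    · have hs : (Pi.single (b, i) (1 : ℂ) : Fin 2 × Fin n → ℂ) (pb, pi) = 0 := by
        simp [Pi.single_apply, hp]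
      split_ifs <;> simp_all
  set φ : ExtAlg2 n →ₐ[ℂ] ExtAlg2 n :=
    (ExteriorAlgebra.lift ℂ) ⟨(ι ℂ).comp P, fun m => ι_sq_zero _⟩ with hφ
  have hφgen : ∀ (b : Fin 2) (i : Fin n),
      φ (bgen n b i) = if i ∈ C b then bgen n b i else 0 := by
    intro b i
    rw [bgen, hφ, lift_ι_apply, LinearMap.comp_apply, hPsingle]
    split_ifs
    · rfl
    · rw [map_zero]
  have hkill : ∀ (b : Fin 2) (S : Finset (Fin n)) (i : Fin n),
      i ∈ S → i ∉ C b → φ (bProd n b S) = 0 := by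
    intro b S i hiS hiC
    rw [bProd, map_list_prod, List.map_map]
    refine List.prod_eq_zero ?_
    rw [List.mem_map]
    refine ⟨i, (Finset.mem_sort _).mpr hiS, ?_⟩
    show φ (bgen n b i) = 0
    rw [hφgen, if_neg hiC]
  have hfix : ∀ (b : Fin 2) (S : Finset (Fin n)), (∀ i ∈ S, i ∈ C b) →
      φ (bProd n b S) = bProd n b S := by
    intro b S hSC
    rw [bProd, map_list_prod, List.map_map]
    congr 1
    refine List.map_congr_left (fun j hj => ?_)
    show φ (bgen n b j) = bgen n b j
    rw [hφgen, if_pos (hSC j ((Finset.mem_sort _).mp hj))]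
  have hrel : ∀ ⦃x y⦄, A2Rel n r x y → φ x = φ y := by
    rintro x y ⟨rfl, b, S, hS0, hScard, rfl⟩
    rw [map_zero]
    have hbig : ∃ i ∈ S, i ∉ C b := by
      by_contra hcon
      push_neg at hcon
      by_cases hb : b = 0
      · have hsub : S ⊆ I₀ := by
          intro i hi
          have h2 := hcon i hi
          rw [hC] at h2
          simp only [hb, if_pos rfl] at h2
          rcases Finset.mem_insert.mp h2 with h3 | h3
          · exact absurd (congrArg Fin.val h3) (hS0 i hi)
          · exact h3
        have := Finset.card_le_card hsub
        omega
      · have hsub : S ⊆ J \ I₀ := by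
          intro i hi
          have h2 := hcon i hi
          rw [hC] at h2
          simpa only [if_neg hb] using h2
        have := Finset.card_le_card hsub
        omega
    obtain ⟨i, hiS, hiC⟩ := hbig
    exact hkill b S i hiS hiC
  set φq : A2 n r →ₐ[ℂ] ExtAlg2 n := (RingQuot.liftAlgHom ℂ) ⟨φ, hrel⟩ with hφq'
  have hφq : ∀ x, φq (a2mk n r x) = φ x := fun x =>
    RingQuot.liftAlgHom_mkAlgHom_apply ℂ φ hrel x
  -- the list of generator positions of the distinguished monomial
  set L : List (Fin 2 × Fin n) :=
    ((0 : Fin 2), z) :: (((I₀.sort (· ≤ ·)).map fun j => ((0 : Fin 2), j)) ++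
      ((J \ I₀).sort (· ≤ ·)).map fun j => ((1 : Fin 2), j)) with hL
  have hz0 : z ∉ I₀ := fun h => hJ0 z (hI₀J h) rfl
  have hnodup : L.Nodup := by
    rw [hL, List.nodup_cons, List.nodup_append]
    refine ⟨?_, ?_, ?_, ?_⟩
    · intro hmem
      rcases List.mem_append.mp hmem with h | h
      · obtain ⟨j, hj, hj2⟩ := List.mem_map.mp h
        have hjz : j = z := (Prod.ext_iff.mp hj2).2
        subst hjz
        exact hz0 ((Finset.mem_sort _).mp hj)
      · obtain ⟨j, hj, hj2⟩ := List.mem_map.mp h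
        have h1 := congrArg Prod.fst hj2
        simp at h1
    · exact (Finset.sort_nodup _ _).map (fun a b h => (Prod.ext_iff.mp h).2)
    · exact (Finset.sort_nodup _ _).map (fun a b h => (Prod.ext_iff.mp h).2)
    · intro p hpA q hpB hpq
      obtain ⟨j, _, hj2⟩ := List.mem_map.mp hpA
      obtain ⟨j', _, hj2'⟩ := List.mem_map.mp hpB
      rw [← hj2, ← hj2'] at hpq
      have h1 := congrArg Prod.fst hpq
      simp at h1
  set m := L.length with hm
  set v : Fin m → (Fin 2 × Fin n → ℂ) := fun j => Pi.single (L.get j) 1 with hv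
  have hgetinj : Function.Injective L.get := List.nodup_iff_injective_get.mp hnodup
  have hw : bgen n 0 z * bProd n 0 I₀ * bProd n 1 (J \ I₀) = ιMulti ℂ m v := by
    rw [ιMulti_apply]
    have h1 : (List.ofFn fun j => ι ℂ (v j)) = L.map fun p => ι ℂ (Pi.single p 1) := by
      conv_rhs => rw [← List.ofFn_get L]
      rw [List.map_ofFn]
      rfl
    rw [h1, hL]
    simp only [bProd, List.map_cons, List.map_append, List.map_map, List.prod_cons,
      List.prod_append, Function.comp_def, mul_assoc]
    rfl
  set D : (Fin 2 × Fin n → ℂ) [⋀^Fin m]→ₗ[ℂ] ℂ :=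
    ((Pi.basisFun ℂ (Fin m)).det).compLinearMap (LinearMap.funLeft ℂ ℂ L.get) with hD
  set F : ExtAlg2 n →ₗ[ℂ] ℂ := liftAlternating (Pi.single m D) with hF
  have hFw : F (ιMulti ℂ m v) = 1 := by
    rw [hF, liftAlternating_apply_ιMulti, Pi.single_eq_same, hD,
      AlternatingMap.compLinearMap_apply]
    have h2 : ⇑(LinearMap.funLeft ℂ ℂ L.get) ∘ v = ⇑(Pi.basisFun ℂ (Fin m)) := by
      funext j
      funext j'
      simp only [Function.comp_apply, LinearMap.funLeft_apply, hv, Pi.basisFun_apply]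
      rcases eq_or_ne j' j with rfl | hne
      · simp
      · rw [Pi.single_eq_of_ne (fun h => hne (hgetinj h)), Pi.single_eq_of_ne hne]
    have h3 := congrArg (Pi.basisFun ℂ (Fin m)).det h2
    rw [Module.Basis.det_self] at h3
    exact h3
  have hC00 : z ∈ C 0 := by simp [hC]
  have hC0I : ∀ i ∈ I₀, i ∈ C 0 := by intro i hi; simp [hC]; exact Or.inr hi
  have hC1 : ∀ i ∈ J \ I₀, i ∈ C 1 := by
    intro i hi
    have : (1 : Fin 2) ≠ 0 := by decide
    simpa [hC, this] using hi
  have hmain : φ (bgen n 0 z * bProd n 0 I₀ * bProd n 1 (J \ I₀)) =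
      bgen n 0 z * bProd n 0 I₀ * bProd n 1 (J \ I₀) := by
    rw [map_mul, map_mul, hfix 0 I₀ hC0I, hfix 1 (J \ I₀) hC1, hφgen, if_pos hC00]
  refine ⟨F.comp φq.toLinearMap, ?_, ?_⟩
  · rw [LinearMap.comp_apply, AlgHom.toLinearMap_apply]
    have hbt : φq (basicTerm n r hn J I₀) = ιMulti ℂ m v := by
      simp only [basicTerm]
      rw [hφq, ← hz, hmain, hw]
    rw [hbt, hFw]
  · intro I hIJ hIc hne
    obtain ⟨i, hiI, hiI₀⟩ := Finset.not_subset.mp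
      (fun hsub => hne (Finset.eq_of_subset_of_card_le hsub (by omega)))
    have hiC : i ∉ C 0 := by
      simp only [hC, if_pos rfl]
      intro hmem
      rcases Finset.mem_insert.mp hmem with h3 | h3
      · exact hJ0 i (hIJ hiI) (congrArg Fin.val h3)
      · exact hiI₀ h3
    rw [LinearMap.comp_apply, AlgHom.toLinearMap_apply]
    have hbt : φq (basicTerm n r hn J I) = 0 := by
      simp only [basicTerm]
      rw [hφq]
      rw [map_mul]
      rw [map_mul]
      rw [hkill 0 I i hiI hiC]
      rw [mul_zero, zero_mul]
    rw [hbt, map_zero]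


set_option maxHeartbeats 1000000 in
/-- with `k = min{n-1, 2r-2}` and `J ⊆ {1,…,n-1}`, `|J| = k` (`n > r > 1`), the
bidegree-`(r, k+1-r)` component of `π = ē₀ ∏_{i∈J} ē_i` equals
`∑_{I ⊆ J, |I| = r-1} ± e₀e_I ⊗ e_{J∖I}`, which is nonzero because the terms
`e₀e_I ⊗ e_{J∖I}` are distinct elements of a basis of `A ⊗ A`. -/
theorem pi_bidegree_component (n r : ℕ) (hr : 1 < r) (hrn : r < n)
    (J : Finset (Fin n)) (hJ0 : ∀ i ∈ J, (i : ℕ) ≠ 0)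
    (hJcard : J.card = min (n - 1) (2 * r - 2)) :
    ∃ c : Finset (Fin n) → ℂ, (∀ I, c I = 1 ∨ c I = -1) ∧
      ∃ ρ ∈ ⨆ (p : ℕ × ℕ) (_ : p ≠ (r, min (n - 1) (2 * r - 2) + 1 - r)),
          bicomp n r p.1 p.2,
        -- `π` decomposes as its `(r, k+1-r)`-component plus terms in the other bicomponents,
        ebar n r ⟨0, by omega⟩ * ((J.sort (· ≤ ·)).map (ebar n r)).prod =
          (∑ I ∈ J.powerset.filter (fun I => I.card = r - 1),
            c I • basicTerm n r (by omega) J I) + ρ ∧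
        -- the summands of the component lie in the `(r, k+1-r)`-bicomponent,
        (∀ I ∈ J.powerset.filter (fun I => I.card = r - 1),
          basicTerm n r (by omega) J I ∈
            bicomp n r r (min (n - 1) (2 * r - 2) + 1 - r)) ∧
        -- they are distinct elements of a basis, in particular linearly independent,
        LinearIndependent ℂ
          (fun I : {I : Finset (Fin n) // I ∈ J.powerset.filter (fun I => I.card = r - 1)} =>
            basicTerm n r (by omega) J I.1) ∧
        -- and hence the component is nonzero.
        (∑ I ∈ J.powerset.filter (fun I => I.card = r - 1),
          c I • basicTerm n r (by omega) J I) ≠ 0 := by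
  classical
  have hn : 0 < n := by omega
  have hk1 : r - 1 ≤ min (n - 1) (2 * r - 2) := le_min (by omega) (by omega)
  have hk2 : min (n - 1) (2 * r - 2) ≤ 2 * r - 2 := min_le_right _ _
  set k := min (n - 1) (2 * r - 2) with hk
  set z : Fin n := ⟨0, hn⟩ with hz
  have hIfacts : ∀ I : Finset (Fin n), I ⊆ J → I.card = r - 1 →
      (J \ I).card = k + 1 - r ∧ (J \ I).card < r ∧ z ∉ I ∧
      (insert z I).card = r ∧ (∀ j ∈ I, z < j) := by
    intro I hIJ hIc
    have hzI : z ∉ I := fun h => hJ0 z (hIJ h) rfl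
    have hsd : (J \ I).card = J.card - I.card := Finset.card_sdiff_of_subset hIJ
    have hzlt : ∀ j ∈ I, z < j := by
      intro j hj
      have := hJ0 j (hIJ hj)
      exact Fin.lt_def.mpr (Nat.pos_of_ne_zero (by omega))
    refine ⟨by omega, by omega, hzI, ?_, hzlt⟩
    rw [Finset.card_insert_of_notMem hzI]
    omega
  set l : List (Fin n) := z :: J.sort (· ≤ ·) with hl
  have hsort : l.Pairwise (· < ·) := by
    rw [hl, List.pairwise_cons]
    refine ⟨fun j hj => ?_, (Finset.sortedLT_sort J).pairwise⟩
    have := hJ0 j ((Finset.mem_sort _).mp hj)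
    exact Fin.lt_def.mpr (Nat.pos_of_ne_zero (by omega))
  obtain ⟨ε, hε, hexp⟩ := expand l hsort
  have hT : l.toFinset = insert z J := by
    rw [hl, List.toFinset_cons, Finset.sort_toFinset]
  rw [hT] at hexp
  have hzJ : z ∉ J := fun h => hJ0 z h rfl
  have hπ : ebar n r z * ((J.sort (· ≤ ·)).map (ebar n r)).prod =
      ∑ S ∈ (insert z J).powerset,
        ε S • a2mk n r (bProd n 0 (insert z J \ S) * bProd n 1 S) := by
    have h2 : (⇑(a2mk n r) ∘ fun i => bgen n 1 i - bgen n 0 i) = ebar n r := by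
      funext i
      simp only [Function.comp_apply, map_sub, ebar]
    have h3 : ebar n r z * ((J.sort (· ≤ ·)).map (ebar n r)).prod =
        a2mk n r ((l.map fun i => bgen n 1 i - bgen n 0 i).prod) := by
      rw [map_list_prod, List.map_map, h2, hl, List.map_cons, List.prod_cons]
    rw [h3, hexp, map_sum]
    refine Finset.sum_congr rfl fun S hS => ?_
    rw [map_smul]
  set c : Finset (Fin n) → ℂ := fun I => ε (J \ I) with hc
  refine ⟨c, fun I => hε (J \ I), ?_⟩
  set ρ : A2 n r := ∑ S ∈ (insert z J).powerset.filter
      (fun S => ¬ ((insert z J \ S).card = r ∧ z ∉ S)),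
      ε S • a2mk n r (bProd n 0 (insert z J \ S) * bProd n 1 S) with hρ
  have hSJsub : ∀ S : Finset (Fin n), S ⊆ insert z J → z ∉ S → S ⊆ J := by
    intro S hSsub hzS x hx
    rcases Finset.mem_insert.mp (hSsub hx) with h3 | h3
    · exact absurd (h3 ▸ hx) hzS
    · exact h3
  have hρmem : ρ ∈ ⨆ (p : ℕ × ℕ) (_ : p ≠ (r, k + 1 - r)), bicomp n r p.1 p.2 := by
    rw [hρ]
    refine Submodule.sum_mem _ fun S hS => ?_
    rw [Finset.mem_filter, Finset.mem_powerset] at hS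
    obtain ⟨hSsub, hSbad⟩ := hS
    by_cases hcard : (insert z J \ S).card = r
    · have hzS : z ∈ S := by
        by_contra hzS
        exact hSbad ⟨hcard, hzS⟩
      have hnz : ∀ i ∈ insert z J \ S, (i : ℕ) ≠ 0 := by
        intro i hi
        obtain ⟨hi1, hi2⟩ := Finset.mem_sdiff.mp hi
        rcases Finset.mem_insert.mp hi1 with h3 | h3
        · exact absurd (h3 ▸ hzS) hi2
        · exact hJ0 i h3
      have hterm : a2mk n r (bProd n 0 (insert z J \ S) * bProd n 1 S) = 0 := by
        rw [map_mul, a2mk_bProd_eq_zero 0 hnz hcard, zero_mul]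
      rw [hterm, smul_zero]
      exact zero_mem _
    · have hp : ((insert z J \ S).card, S.card) ≠ (r, k + 1 - r) := by
        intro h
        exact hcard (congrArg Prod.fst h)
      refine Submodule.smul_mem _ _ ?_
      exact Submodule.mem_iSup_of_mem ((insert z J \ S).card, S.card)
        (Submodule.mem_iSup_of_mem hp (term_mem_bicomp _ _))
  refine ⟨ρ, hρmem, ?_, ?_, ?_, ?_⟩
  · -- the decomposition equation
    rw [hπ, ← Finset.sum_filter_add_sum_filter_not (insert z J).powerset
      (fun S => (insert z J \ S).card = r ∧ z ∉ S)]
    congr 1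
    refine Finset.sum_nbij' (fun S => J \ S) (fun I => J \ I) ?_ ?_ ?_ ?_ ?_
    · intro S hS
      rw [Finset.mem_filter, Finset.mem_powerset] at hS
      obtain ⟨hSsub, hScard, hzS⟩ := hS
      have hSJ : S ⊆ J := hSJsub S hSsub hzS
      rw [Finset.mem_filter, Finset.mem_powerset]
      refine ⟨Finset.sdiff_subset, ?_⟩
      have h4 : insert z J \ S = insert z (J \ S) := Finset.insert_sdiff_of_notMem _ hzS
      have h5 : z ∉ J \ S := fun h => hzJ (Finset.mem_sdiff.mp h).1
      rw [h4, Finset.card_insert_of_notMem h5] at hScard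
      show (J \ S).card = r - 1
      omega
    · intro I hI
      rw [Finset.mem_filter, Finset.mem_powerset] at hI
      obtain ⟨hIJ, hIc⟩ := hI
      obtain ⟨h1, h2, hzI, h4, h5⟩ := hIfacts I hIJ hIc
      rw [Finset.mem_filter, Finset.mem_powerset]
      refine ⟨(Finset.sdiff_subset).trans (Finset.subset_insert z J), ?_, ?_⟩
      · have h6 : insert z J \ (J \ I) = insert z (J \ (J \ I)) :=
          Finset.insert_sdiff_of_notMem _ (fun h => hzJ (Finset.mem_sdiff.mp h).1)
        rw [h6, Finset.sdiff_sdiff_self_left, Finset.inter_eq_right.mpr hIJ]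
        exact h4
      · exact fun h => hzJ (Finset.mem_sdiff.mp h).1
    · intro S hS
      rw [Finset.mem_filter, Finset.mem_powerset] at hS
      obtain ⟨hSsub, hScard, hzS⟩ := hS
      show J \ (J \ S) = S
      rw [Finset.sdiff_sdiff_self_left]
      exact Finset.inter_eq_right.mpr (hSJsub S hSsub hzS)
    · intro I hI
      rw [Finset.mem_filter, Finset.mem_powerset] at hI
      show J \ (J \ I) = I
      rw [Finset.sdiff_sdiff_self_left]
      exact Finset.inter_eq_right.mpr hI.1
    · intro S hS
      rw [Finset.mem_filter, Finset.mem_powerset] at hS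
      obtain ⟨hSsub, hScard, hzS⟩ := hS
      have hSJ : S ⊆ J := hSJsub S hSsub hzS
      have hJJS : J \ (J \ S) = S := by
        rw [Finset.sdiff_sdiff_self_left]
        exact Finset.inter_eq_right.mpr hSJ
      have hIJ : J \ S ⊆ J := Finset.sdiff_subset
      have hIc : (J \ S).card = r - 1 := by
        have h4 : insert z J \ S = insert z (J \ S) := Finset.insert_sdiff_of_notMem _ hzS
        have h5 : z ∉ J \ S := fun h => hzJ (Finset.mem_sdiff.mp h).1
        rw [h4, Finset.card_insert_of_notMem h5] at hScard
        omega
      obtain ⟨h1, h2, hzI, h4, h5⟩ := hIfacts (J \ S) hIJ hIc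
      have hbt : basicTerm n r hn J (J \ S) =
          a2mk n r (bProd n 0 (insert z J \ S) * bProd n 1 S) := by
        rw [basicTerm, Finset.insert_sdiff_of_notMem _ hzS, bProd_insert 0 z (J \ S) h5,
          hJJS, mul_assoc]
      show ε S • a2mk n r (bProd n 0 (insert z J \ S) * bProd n 1 S) =
        ε (J \ (J \ S)) • basicTerm n r hn J (J \ S)
      rw [hJJS, hbt]
  · -- membership of the basic terms
    intro I hI
    rw [Finset.mem_filter, Finset.mem_powerset] at hI
    obtain ⟨hIJ, hIc⟩ := hI
    obtain ⟨h1, h2, hzI, h4, h5⟩ := hIfacts I hIJ hIc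
    have hbt : basicTerm n r hn J I =
        a2mk n r (bProd n 0 (insert z I) * bProd n 1 (J \ I)) := by
      rw [basicTerm, bProd_insert 0 z I h5, mul_assoc]
    have hmem := term_mem_bicomp (n := n) (r := r) (insert z I) (J \ I)
    rw [h4, h1] at hmem
    rw [← hbt] at hmem
    exact hmem
  · -- linear independence
    rw [Fintype.linearIndependent_iff]
    intro g hg I₀s
    obtain ⟨I₀, hI₀P⟩ := I₀s
    have hI₀P' := hI₀P
    rw [Finset.mem_filter, Finset.mem_powerset] at hI₀P'
    obtain ⟨hI₀J, hI₀c⟩ := hI₀P'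
    obtain ⟨h1, h2, hzI, h4, h5⟩ := hIfacts I₀ hI₀J hI₀c
    obtain ⟨Φ, hΦ1, hΦ2⟩ := phi_exists hn (by omega) J I₀ hJ0 hI₀J hI₀c h2
    have happ := congrArg Φ hg
    rw [map_sum, map_zero] at happ
    rw [Finset.sum_eq_single (⟨I₀, hI₀P⟩ :
        {I : Finset (Fin n) // I ∈ J.powerset.filter (fun I => I.card = r - 1)})] at happ
    · rw [map_smul] at happ
      have h6 : g ⟨I₀, hI₀P⟩ • (1 : ℂ) = 0 := by
        rw [← hΦ1]
        exact happ
      simpa using h6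
    · intro b _ hbne
      have hb := b.2
      rw [Finset.mem_filter, Finset.mem_powerset] at hb
      rw [map_smul]
      show g b • Φ (basicTerm n r hn J b.1) = 0
      rw [hΦ2 b.1 hb.1 hb.2 (fun h => hbne (Subtype.ext h)), smul_zero]
    · intro h
      exact absurd (Finset.mem_univ _) h
  · -- nonvanishing
    intro hcontra
    obtain ⟨I₀, hI₀J, hI₀c⟩ := Finset.exists_subset_card_eq (show r - 1 ≤ J.card by omega)
    have hI₀P : I₀ ∈ J.powerset.filter (fun I => I.card = r - 1) :=
      Finset.mem_filter.mpr ⟨Finset.mem_powerset.mpr hI₀J, hI₀c⟩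
    obtain ⟨h1, h2, hzI, h4, h5⟩ := hIfacts I₀ hI₀J hI₀c
    obtain ⟨Φ, hΦ1, hΦ2⟩ := phi_exists hn (by omega) J I₀ hJ0 hI₀J hI₀c h2
    have happ := congrArg Φ hcontra
    rw [map_sum, map_zero] at happ
    rw [Finset.sum_eq_single_of_mem I₀ hI₀P] at happ
    · rw [map_smul] at happ
      have h6 : c I₀ • (1 : ℂ) = 0 := by
        rw [← hΦ1]
        exact happ
      rcases hε (J \ I₀) with h | h
      · have h7 : c I₀ = 1 := h
        rw [h7] at h6
        simpa using h6
      · have h7 : c I₀ = -1 := h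
        rw [h7] at h6
        simpa using h6
    · intro b hb hbne
      rw [Finset.mem_filter, Finset.mem_powerset] at hb
      rw [map_smul]
      show c b • Φ (basicTerm n r hn J b) = 0
      rw [hΦ2 b hb.1 hb.2 hbne, smul_zero]
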